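/- Let r be a rational function of degree N and let f, g ∈ 𝔏(r). For α ∈ Ω(r) with distinct roots w_1(α), …, w_N(α) of r(z) = α, the sum Σ_{n=1}^N f(w_n(α)) g(w_n(α)) / r′(w_n(α)) is independent of α ∈ Ω(r). -/

import Mathlib

open Polynomial Finset

noncomputable section

/-- The rational function `r = p/q`, evaluated pointwise. -/
def ratEval (p q : Polynomial ℂ) (z : ℂ) : ℂ := p.eval z / q.eval z

/-- The difference quotient `z ↦ (r(z) − r(a))/(z − a)` (equal to `r′(a)` at `z = a`). -/
def dq (p q : Polynomial ℂ) (a : ℂ) : ℂ → ℂ :=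
  fun z => if z = a then deriv (ratEval p q) a
           else (ratEval p q z - ratEval p q a) / (z - a)

/-- The state space `𝔏(r)`: the span of the difference quotients of `r = p/q`. -/
def stateSpace (p q : Polynomial ℂ) : Submodule ℂ (ℂ → ℂ) :=
  Submodule.span ℂ {f | ∃ a : ℂ, q.eval a ≠ 0 ∧ f = dq p q a}

lemma deriv_ratEval (p q : Polynomial ℂ) (x : ℂ) (hx : q.eval x ≠ 0) :
    deriv (ratEval p q) x =
      ((derivative p).eval x * q.eval x - p.eval x * (derivative q).eval x) / (q.eval x) ^ 2 := by
  have h := (p.hasDerivAt x).div (q.hasDerivAt x) hx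
  exact h.deriv


lemma lagrange_eval {N : ℕ} (hN1 : 1 ≤ N) (w : Fin N → ℂ) (hw : Function.Injective w)
    (G : Polynomial ℂ) (hG : G.natDegree < N) (a : ℂ) :
    G.eval a = ∑ n : Fin N, G.eval (w n) *
      ((∏ m ∈ univ.erase n, (w n - w m))⁻¹ * ∏ m ∈ univ.erase n, (a - w m)) := by
  have hcard : (#(univ : Finset (Fin N)) : ℕ) = N := by simp
  have hdeg : G.degree < (#(univ : Finset (Fin N)) : ℕ) := by
    rw [hcard]
    exact lt_of_le_of_lt degree_le_natDegree (by exact_mod_cast hG)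
  have h := Lagrange.eq_interpolate (f := G) (v := w) (hw.injOn) hdeg
  conv_lhs => rw [h]
  rw [Lagrange.interpolate_apply, eval_finset_sum]
  refine Finset.sum_congr rfl fun n _ => ?_
  rw [eval_mul, eval_C]
  congr 1
  rw [Lagrange.basis, eval_prod]
  rw [← Finset.prod_inv_distrib, ← Finset.prod_mul_distrib]
  refine Finset.prod_congr rfl fun m _ => ?_
  simp [Lagrange.basisDivisor]

lemma key (p q : Polynomial ℂ) (hco : IsCoprime p q) (N : ℕ) (hN1 : 1 ≤ N)
    (hN : p.natDegree = N) (hdeg : q.natDegree ≤ p.natDegree)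
    (α : ℂ) (w : Fin N → ℂ) (hw : Function.Injective w)
    (hrw : ∀ n, p.eval (w n) = α * q.eval (w n)) (hqw : ∀ n, q.eval (w n) ≠ 0)
    (a b : ℂ) (ha : q.eval a ≠ 0) (hb : q.eval b ≠ 0) :
    ∑ n : Fin N, dq p q a (w n) * dq p q b (w n) / deriv (ratEval p q) (w n)
      = (((C (q.eval b) * p - C (p.eval b) * q) /ₘ (X - C b)).eval a)
          / (q.eval a * q.eval b) := by
  set P : Polynomial ℂ := p - C α * q with hP
  set Pw : Polynomial ℂ := ∏ n : Fin N, (X - C (w n)) with hPwdef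
  -- divisibility
  have hroot : ∀ n : Fin N, P.eval (w n) = 0 := by
    intro n; simp [hP, hrw n]
  have hdvd : Pw ∣ P := by
    refine Finset.prod_dvd_of_coprime ?_ fun n _ => ?_
    · exact (Polynomial.pairwise_coprime_X_sub_C hw).set_pairwise _
    · rw [Polynomial.dvd_iff_isRoot]; exact hroot n
  have hP0 : P ≠ 0 := by
    intro h0
    have hpq : p = C α * q := by rw [← sub_eq_zero]; exact h0
    have hu : IsUnit q := hco.isUnit_of_dvd' ⟨C α, by rw [hpq]; ring⟩ dvd_rfl
    have hq0 : q.natDegree = 0 := natDegree_eq_zero_of_isUnit hu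
    have hple : p.natDegree ≤ q.natDegree := by
      rw [hpq]; exact natDegree_C_mul_le α q
    omega
  have hPwMonic : Pw.Monic := monic_prod_of_monic _ _ fun n _ => monic_X_sub_C (w n)
  have hPwdeg : Pw.natDegree = N := by
    rw [hPwdef, natDegree_prod _ _ fun n _ => X_sub_C_ne_zero (w n)]
    simp
  obtain ⟨E, hE⟩ := hdvd
  have hE0 : E ≠ 0 := by rintro rfl; rw [mul_zero] at hE; exact hP0 hE
  have hPdeg : P.natDegree ≤ N := by
    refine le_trans (natDegree_sub_le _ _) ?_
    simp only [max_le_iff]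
    exact ⟨le_of_eq hN, le_trans (natDegree_C_mul_le α q) (hN ▸ hdeg)⟩
  have hEdeg : E.natDegree = 0 := by
    have := natDegree_mul (hPwMonic.ne_zero) hE0
    rw [← hE, hPwdeg] at this
    omega
  obtain ⟨c, hc⟩ : ∃ c : ℂ, E = C c := ⟨E.coeff 0, eq_C_of_natDegree_eq_zero hEdeg⟩
  have hc0 : c ≠ 0 := by rintro rfl; simp at hc; exact hE0 hc
  have hPc : P = C c * Pw := by rw [hE, hc]; ring
  -- local notation
  set D : Fin N → ℂ := fun n => ∏ m ∈ univ.erase n, (w n - w m) with hD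
  have hD0 : ∀ n, D n ≠ 0 := by
    intro n
    rw [hD]
    refine Finset.prod_ne_zero_iff.mpr fun m hm => ?_
    rw [sub_ne_zero]
    exact fun h => (Finset.mem_erase.mp hm).1 (hw h).symm
  -- derivative of Pw at nodes
  have hPw' : ∀ n, (derivative Pw).eval (w n) = D n := by
    intro n
    have hsplit : Pw = (X - C (w n)) * ∏ m ∈ univ.erase n, (X - C (w m)) :=
      (Finset.mul_prod_erase _ _ (Finset.mem_univ n)).symm
    rw [hsplit, derivative_mul]
    simp [eval_prod, hD]
  -- numerator of the derivative of r at the nodes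
  have hnum : ∀ n, (derivative p).eval (w n) * q.eval (w n)
      - p.eval (w n) * (derivative q).eval (w n) = c * D n * q.eval (w n) := by
    intro n
    have h1 : (derivative P).eval (w n) = c * D n := by
      rw [hPc, derivative_C_mul, eval_mul, eval_C, hPw']
    rw [hP, derivative_sub, derivative_C_mul, eval_sub, eval_mul, eval_C] at h1
    rw [hrw n]
    linear_combination q.eval (w n) * h1
  -- value of the derivative of r at the nodes
  have hder : ∀ n, deriv (ratEval p q) (w n) = c * D n / q.eval (w n) := by
    intro n
    rw [deriv_ratEval p q _ (hqw n), hnum n, sq, mul_div_mul_right _ _ (hqw n)]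
  have hder0 : ∀ n, deriv (ratEval p q) (w n) ≠ 0 := by
    intro n
    rw [hder n]
    exact div_ne_zero (mul_ne_zero hc0 (hD0 n)) (hqw n)
  -- value of the difference quotients at the nodes
  have hdqval : ∀ x : ℂ, q.eval x ≠ 0 → ∀ n, dq p q x (w n)
      = c * (∏ m ∈ univ.erase n, (x - w m)) / q.eval x := by
    intro x hx n
    by_cases hxn : w n = x
    · rw [dq, if_pos hxn, deriv_ratEval p q x hx]
      have h1 : (derivative p).eval x * q.eval x - p.eval x * (derivative q).eval x
          = c * D n * q.eval x := by rw [← hxn]; exact hnum n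
      rw [h1, ← hxn, sq, mul_div_mul_right _ _ (hqw n)]
    · rw [dq, if_neg hxn]
      have hPx : p.eval x - α * q.eval x = c * ((x - w n) * ∏ m ∈ univ.erase n, (x - w m)) := by
        have h1 : P.eval x = c * Pw.eval x := by rw [hPc, eval_mul, eval_C]
        rw [hP, eval_sub, eval_mul, eval_C] at h1
        rw [h1, hPwdef, eval_prod]
        simp only [eval_sub, eval_X, eval_C]
        rw [← Finset.mul_prod_erase _ _ (Finset.mem_univ n)]
      have hr : ratEval p q (w n) = α := by
        rw [ratEval, hrw n, mul_div_assoc, div_self (hqw n), mul_one]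
      rw [hr, ratEval]
      have hwnx : w n - x ≠ 0 := sub_ne_zero.mpr hxn
      rw [div_eq_div_iff hwnx hx, sub_mul, div_mul_cancel₀ _ hx]
      linear_combination -hPx
  -- evaluations of c * Pw
  have hPx : ∀ x : ℂ, c * Pw.eval x = p.eval x - α * q.eval x := by
    intro x
    have h1 : P.eval x = c * Pw.eval x := by rw [hPc, eval_mul, eval_C]
    rw [← h1, hP, eval_sub, eval_mul, eval_C]
  -- the auxiliary polynomial G
  set Mg : Polynomial ℂ := C (q.eval b) * Pw - C (Pw.eval b) * q with hMg
  have hMgb : Mg.eval b = 0 := by simp [hMg]; ring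
  set G : Polynomial ℂ := Mg /ₘ (X - C b) with hGdef
  have hfac : Mg = (X - C b) * G := by
    have hdvd2 : (X - C b) ∣ Mg := dvd_iff_isRoot.mpr hMgb
    conv_lhs => rw [← modByMonic_add_div Mg (X - C b)]
    rw [(modByMonic_eq_zero_iff_dvd (monic_X_sub_C b)).mpr hdvd2, zero_add]
  have hGdeg : G.natDegree < N := by
    have h1 : Mg.natDegree ≤ N := by
      refine le_trans (natDegree_sub_le _ _) ?_
      simp only [max_le_iff]
      constructor
      · exact le_trans (natDegree_C_mul_le _ _) (le_of_eq hPwdeg)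
      · exact le_trans (natDegree_C_mul_le _ _) (hN ▸ hdeg)
    have h2 := natDegree_divByMonic Mg (monic_X_sub_C b)
    rw [natDegree_X_sub_C] at h2
    rw [hGdef, h2]
    omega
  -- values of G at the nodes
  have hGval : ∀ n, G.eval (w n) = q.eval (w n) * ∏ m ∈ univ.erase n, (b - w m) := by
    intro n
    have hPwn : Pw.eval (w n) = 0 := by
      rw [hPwdef, eval_prod]
      exact Finset.prod_eq_zero (Finset.mem_univ n) (by simp)
    by_cases hbn : b = w n
    · have h1 : derivative Mg = G + (X - C b) * derivative G := by
        rw [hfac, derivative_mul, derivative_X_sub_C, one_mul]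
      have h2 : (derivative Mg).eval b = G.eval b := by rw [h1]; simp
      have h3 : (derivative Mg).eval b
          = q.eval b * (derivative Pw).eval b - Pw.eval b * (derivative q).eval b := by
        rw [hMg, derivative_sub, derivative_mul, derivative_mul, derivative_C, derivative_C]
        simp
      have hPwb0 : Pw.eval b = 0 := by rw [hbn]; exact hPwn
      have hPw'b : (derivative Pw).eval b = D n := by rw [hbn]; exact hPw' n
      have hprod : ∏ m ∈ univ.erase n, (b - w m) = D n := by rw [hD, hbn]
      rw [← hbn, ← h2, h3, hPwb0, hPw'b, hprod]
      ring
    · have h4 := congrArg (eval (w n)) hfac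
      rw [hMg] at h4
      simp only [eval_sub, eval_mul, eval_X, eval_C] at h4
      rw [hPwn, mul_zero, zero_sub] at h4
      have hPwb : Pw.eval b = (b - w n) * ∏ m ∈ univ.erase n, (b - w m) := by
        rw [hPwdef, eval_prod]
        simp only [eval_sub, eval_X, eval_C]
        rw [← Finset.mul_prod_erase _ _ (Finset.mem_univ n)]
      have hbn' : w n - b ≠ 0 := sub_ne_zero.mpr (fun h => hbn h.symm)
      apply mul_left_cancel₀ hbn'
      rw [← h4, hPwb]
      ring
  -- Lagrange interpolation at the nodes
  have hlag := lagrange_eval hN1 w hw G hGdeg a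
  -- the α-independent polynomial
  set M : Polynomial ℂ := C (q.eval b) * p - C (p.eval b) * q with hM
  have hKfac : C c * Mg = M := by
    apply Polynomial.funext
    intro x
    simp only [hMg, hM, eval_mul, eval_sub, eval_C]
    linear_combination (q.eval b) * (hPx x) - (q.eval x) * (hPx b)
  have hMb : M.eval b = 0 := by simp [hM]; ring
  have hfacM : M = (X - C b) * (M /ₘ (X - C b)) := by
    have hdvd3 : (X - C b) ∣ M := dvd_iff_isRoot.mpr hMb
    conv_lhs => rw [← modByMonic_add_div M (X - C b)]
    rw [(modByMonic_eq_zero_iff_dvd (monic_X_sub_C b)).mpr hdvd3, zero_add]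
  have hKG : C c * G = M /ₘ (X - C b) := by
    apply mul_left_cancel₀ (X_sub_C_ne_zero b)
    rw [← hfacM, ← hKfac, hfac]
    ring
  have hKa : c * G.eval a = (M /ₘ (X - C b)).eval a := by
    have := congrArg (eval a) hKG
    rwa [eval_mul, eval_C] at this
  -- assemble
  calc ∑ n : Fin N, dq p q a (w n) * dq p q b (w n) / deriv (ratEval p q) (w n)
      = ∑ n : Fin N, G.eval (w n) *
          ((∏ m ∈ univ.erase n, (w n - w m))⁻¹ * ∏ m ∈ univ.erase n, (a - w m))
          * (c / (q.eval a * q.eval b)) := by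
        refine Finset.sum_congr rfl fun n _ => ?_
        rw [hdqval a ha n, hdqval b hb n, hder n, hGval n]
        have hDn : (∏ m ∈ univ.erase n, (w n - w m)) ≠ 0 := hD0 n
        field_simp
        exact mul_div_cancel_right₀ _ hDn
    _ = G.eval a * (c / (q.eval a * q.eval b)) := by rw [← Finset.sum_mul, ← hlag]
    _ = (M /ₘ (X - C b)).eval a / (q.eval a * q.eval b) := by
        rw [← hKa]; ring

/-- for `f, g ∈ 𝔏(r)` the sum `Σₙ f(wₙ(α)) g(wₙ(α))/r′(wₙ(α))`
over the distinct preimages of `α ∈ Ω(r)` does not depend on `α`. -/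
theorem stmt10 (p q : Polynomial ℂ) (hco : IsCoprime p q) (N : ℕ)
    (hN : p.natDegree = N) (hdeg : q.natDegree ≤ p.natDegree)
    (f g : ℂ → ℂ) (hf : f ∈ stateSpace p q) (hg : g ∈ stateSpace p q)
    (α β : ℂ)
    (w : Fin N → ℂ) (hw : Function.Injective w)
    (hrw : ∀ n, p.eval (w n) = α * q.eval (w n)) (hqw : ∀ n, q.eval (w n) ≠ 0)
    (v : Fin N → ℂ) (hv : Function.Injective v)
    (hrv : ∀ n, p.eval (v n) = β * q.eval (v n)) (hqv : ∀ n, q.eval (v n) ≠ 0) :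
    ∑ n : Fin N, f (w n) * g (w n) / deriv (ratEval p q) (w n)
      = ∑ n : Fin N, f (v n) * g (v n) / deriv (ratEval p q) (v n) := by
  rcases Nat.eq_zero_or_pos N with h0 | hN1
  · subst h0; simp
  · have gen2 : ∀ a : ℂ, q.eval a ≠ 0 → ∀ bb : ℂ, q.eval bb ≠ 0 →
        ∑ n : Fin N, dq p q a (w n) * dq p q bb (w n) / deriv (ratEval p q) (w n)
          = ∑ n : Fin N, dq p q a (v n) * dq p q bb (v n) / deriv (ratEval p q) (v n) := by
      intro a ha bb hbb
      rw [key p q hco N hN1 hN hdeg α w hw hrw hqw a bb ha hbb,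
          key p q hco N hN1 hN hdeg β v hv hrv hqv a bb ha hbb]
    have gen1 : ∀ a : ℂ, q.eval a ≠ 0 → ∀ g' ∈ stateSpace p q,
        ∑ n : Fin N, dq p q a (w n) * g' (w n) / deriv (ratEval p q) (w n)
          = ∑ n : Fin N, dq p q a (v n) * g' (v n) / deriv (ratEval p q) (v n) := by
      intro a ha g' hg'
      induction hg' using Submodule.span_induction with
      | mem x h => obtain ⟨bb, hbb, rfl⟩ := h; exact gen2 a ha bb hbb
      | zero => simp
      | add x y hx hy ihx ihy =>
          simp only [Pi.add_apply, mul_add, add_div, Finset.sum_add_distrib, ihx, ihy]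
      | smul t x hx ih =>
          have h1 : ∀ (u : Fin N → ℂ),
              ∑ n : Fin N, dq p q a (u n) * (t • x) (u n) / deriv (ratEval p q) (u n)
                = t * ∑ n : Fin N, dq p q a (u n) * x (u n) / deriv (ratEval p q) (u n) := by
            intro u
            rw [Finset.mul_sum]
            refine Finset.sum_congr rfl fun n _ => ?_
            simp only [Pi.smul_apply, smul_eq_mul]
            ring
          rw [h1, h1, ih]
    induction hf using Submodule.span_induction with
    | mem x h => obtain ⟨a, ha, rfl⟩ := h; exact gen1 a ha g hg
    | zero => simp
    | add x y hx hy ihx ihy =>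
        simp only [Pi.add_apply, add_mul, add_div, Finset.sum_add_distrib, ihx, ihy]
    | smul t x hx ih =>
        have h1 : ∀ (u : Fin N → ℂ),
            ∑ n : Fin N, (t • x) (u n) * g (u n) / deriv (ratEval p q) (u n)
              = t * ∑ n : Fin N, x (u n) * g (u n) / deriv (ratEval p q) (u n) := by
          intro u
          rw [Finset.mul_sum]
          refine Finset.sum_congr rfl fun n _ => ?_
          simp only [Pi.smul_apply, smul_eq_mul]
          ring
        rw [h1, h1, ih]

end
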